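/- For all n ≥ 0, g(4n+3) = g(2n+1) + 2·g(n), where g(n) is the number of odd coefficients of (1+x+x^2)^n. -/

import Mathlib

open Polynomial

/-- The number of odd coefficients of a polynomial over ℤ. -/
noncomputable def oddCoeffCount (p : Polynomial ℤ) : ℕ :=
  (p.support.filter fun j => Odd (p.coeff j)).card

noncomputable def g (n : ℕ) : ℕ := oddCoeffCount ((1 + X + X ^ 2) ^ n)

namespace Aux

abbrev F := ZMod 2

lemma odd_eq_support (p : Polynomial ℤ) :
    oddCoeffCount p = (p.map (Int.castRingHom F)).support.card := by
  unfold oddCoeffCount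
  congr 1
  ext j
  simp only [Finset.mem_filter, mem_support_iff, coeff_map, Int.coe_castRingHom, Ne,
    ZMod.intCast_zmod_eq_zero_iff_dvd, Int.odd_iff]
  omega

lemma g_eq (n : ℕ) : g n = (((1 + X + X ^ 2 : F[X])) ^ n).support.card := by
  rw [g, odd_eq_support]
  congr 2
  simp [Polynomial.map_pow, Polynomial.map_add, Polynomial.map_one, Polynomial.map_pow]

lemma expand_two (f : F[X]) : expand F 2 f = f ^ 2 := by
  have h := Polynomial.map_frobenius_expand (p := 2) f
  rwa [ZMod.frobenius_zmod, Polynomial.map_id] at h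

lemma support_mul_X_pow (p : F[X]) (k : ℕ) :
    (p * X ^ k).support = p.support.image (· + k) := by
  ext m
  simp only [mem_support_iff, coeff_mul_X_pow', Finset.mem_image, mem_support_iff]
  constructor
  · intro h
    split_ifs at h with hk
    · exact ⟨m - k, h, by omega⟩
    · exact absurd rfl h
  · rintro ⟨a, ha, rfl⟩
    rw [if_pos (by omega), Nat.add_sub_cancel]
    exact ha

lemma card_support_mul_X_pow (p : F[X]) (k : ℕ) :
    (p * X ^ k).support.card = p.support.card := by
  rw [support_mul_X_pow, Finset.card_image_of_injective _ (add_left_injective k)]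

lemma support_expand {k : ℕ} (hk : 0 < k) (p : F[X]) :
    (expand F k p).support = p.support.image (· * k) := by
  ext m
  simp only [mem_support_iff, coeff_expand hk, Finset.mem_image, mem_support_iff]
  constructor
  · intro h
    split_ifs at h with hd
    · exact ⟨m / k, h, Nat.div_mul_cancel hd⟩
    · exact absurd rfl h
  · rintro ⟨a, ha, rfl⟩
    rw [if_pos (dvd_mul_left k a), Nat.mul_div_cancel a hk]
    exact ha

lemma card_support_expand {k : ℕ} (hk : 0 < k) (p : F[X]) :
    (expand F k p).support.card = p.support.card := by
  rw [support_expand hk, Finset.card_image_of_injective _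
    (fun a b h => Nat.eq_of_mul_eq_mul_right hk h)]

lemma mem_support_expand_mul_X_pow {k r : ℕ} (hk : 0 < k) (p : F[X]) {m : ℕ}
    (hm : m ∈ (expand F k p * X ^ r).support) : m % k = r % k := by
  rw [mem_support_iff, coeff_mul_X_pow'] at hm
  split_ifs at hm with hr
  · rw [ne_eq, coeff_expand hk] at hm
    split_ifs at hm with hd
    · exact ((Nat.modEq_iff_dvd' hr).mpr hd).symm
    · exact absurd rfl hm
  · exact absurd rfl hm

lemma card_support_add (p q : F[X]) (h : Disjoint p.support q.support) :
    (p + q).support.card = p.support.card + q.support.card := by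
  rw [← Finset.card_union_of_disjoint h]
  congr 1
  ext m
  simp only [mem_support_iff, coeff_add, Finset.mem_union, mem_support_iff]
  constructor
  · intro hm
    by_contra hc
    push_neg at hc
    simp [hc.1, hc.2] at hm
  · intro hm
    rcases hm with h1 | h2
    · have : q.coeff m = 0 := by
        by_contra h2
        exact Finset.disjoint_left.mp h (mem_support_iff.mpr h1) (mem_support_iff.mpr h2)
      simp [this, h1]
    · have : p.coeff m = 0 := by
        by_contra h1
        exact Finset.disjoint_left.mp h (mem_support_iff.mpr h1) (mem_support_iff.mpr h2)
      simp [this, h2]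

lemma P3_eq : (1 + X + X ^ 2 : F[X]) ^ 3 = 1 + X + X ^ 3 + X ^ 5 + X ^ 6 := by
  have h2 : (2 : F[X]) = 0 := by
    rw [show (2 : F[X]) = C 2 from (map_ofNat C 2).symm, show (2 : F) = 0 from rfl, map_zero]
  linear_combination (X + 3 * X ^ 2 + 3 * X ^ 3 + 3 * X ^ 4 + X ^ 5 : F[X]) * h2

lemma count4 (Q : F[X]) :
    ((1 + X + X ^ 2 : F[X]) ^ 3 * expand F 4 Q).support.card
      = 3 * Q.support.card + ((1 + X) * Q).support.card := by
  have hE : expand F 4 ((1 + X) * Q) = expand F 4 Q + X ^ 4 * expand F 4 Q := by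
    rw [map_mul, map_add, map_one, expand_X]; ring
  have h : (1 + X + X ^ 2 : F[X]) ^ 3 * expand F 4 Q
      = ((expand F 4 Q + expand F 4 ((1 + X) * Q) * X ^ 1) + expand F 4 Q * X ^ 3)
        + expand F 4 Q * X ^ 6 := by
    rw [P3_eq, hE]; ring
  have h4 : (0:ℕ) < 4 := by norm_num
  have r0 : ∀ m ∈ (expand F 4 Q).support, m % 4 = 0 := by
    intro m hm
    have : m ∈ (expand F 4 Q * X ^ 0).support := by rwa [pow_zero, mul_one]
    simpa using mem_support_expand_mul_X_pow h4 Q this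
  have r1 : ∀ m ∈ (expand F 4 ((1 + X) * Q) * X ^ 1).support, m % 4 = 1 :=
    fun m hm => by simpa using mem_support_expand_mul_X_pow h4 _ hm
  have r3 : ∀ m ∈ (expand F 4 Q * X ^ 3).support, m % 4 = 3 :=
    fun m hm => by simpa using mem_support_expand_mul_X_pow h4 _ hm
  have r6 : ∀ m ∈ (expand F 4 Q * X ^ 6).support, m % 4 = 2 :=
    fun m hm => by simpa using mem_support_expand_mul_X_pow h4 _ hm
  have d1 : Disjoint (expand F 4 Q).support
      ((expand F 4 ((1 + X) * Q) * X ^ 1)).support := by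
    rw [Finset.disjoint_left]
    intro m hm hm'
    have := r0 m hm; have := r1 m hm'; omega
  have d2 : Disjoint ((expand F 4 Q + expand F 4 ((1 + X) * Q) * X ^ 1)).support
      ((expand F 4 Q * X ^ 3)).support := by
    rw [Finset.disjoint_left]
    intro m hm hm'
    have hmem := Polynomial.support_add hm
    rcases Finset.mem_union.mp hmem with h' | h'
    · have := r0 m h'; have := r3 m hm'; omega
    · have := r1 m h'; have := r3 m hm'; omega
  have d3 : Disjoint (((expand F 4 Q + expand F 4 ((1 + X) * Q) * X ^ 1)
      + expand F 4 Q * X ^ 3)).support ((expand F 4 Q * X ^ 6)).support := by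
    rw [Finset.disjoint_left]
    intro m hm hm'
    have hmem := Polynomial.support_add hm
    rcases Finset.mem_union.mp hmem with h' | h'
    · have hmem2 := Polynomial.support_add h'
      rcases Finset.mem_union.mp hmem2 with h'' | h''
      · have := r0 m h''; have := r6 m hm'; omega
      · have := r1 m h''; have := r6 m hm'; omega
    · have := r3 m h'; have := r6 m hm'; omega
  rw [h, card_support_add _ _ d3, card_support_add _ _ d2, card_support_add _ _ d1,
    card_support_mul_X_pow, card_support_mul_X_pow, card_support_mul_X_pow,
    card_support_expand h4, card_support_expand h4]
  ring

lemma count2 (Q : F[X]) :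
    ((1 + X + X ^ 2 : F[X]) * expand F 2 Q).support.card
      = Q.support.card + ((1 + X) * Q).support.card := by
  have hE : expand F 2 ((1 + X) * Q) = expand F 2 Q + X ^ 2 * expand F 2 Q := by
    rw [map_mul, map_add, map_one, expand_X]; ring
  have h : (1 + X + X ^ 2 : F[X]) * expand F 2 Q
      = expand F 2 ((1 + X) * Q) + expand F 2 Q * X ^ 1 := by
    rw [hE]; ring
  have h2 : (0:ℕ) < 2 := by norm_num
  have r0 : ∀ m ∈ (expand F 2 ((1 + X) * Q)).support, m % 2 = 0 := by
    intro m hm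
    have : m ∈ (expand F 2 ((1 + X) * Q) * X ^ 0).support := by rwa [pow_zero, mul_one]
    simpa using mem_support_expand_mul_X_pow h2 _ this
  have r1 : ∀ m ∈ (expand F 2 Q * X ^ 1).support, m % 2 = 1 :=
    fun m hm => by simpa using mem_support_expand_mul_X_pow h2 _ hm
  have d : Disjoint (expand F 2 ((1 + X) * Q)).support (expand F 2 Q * X ^ 1).support := by
    rw [Finset.disjoint_left]
    intro m hm hm'
    have := r0 m hm; have := r1 m hm'; omega
  rw [h, card_support_add _ _ d, card_support_mul_X_pow, card_support_expand h2,
    card_support_expand h2]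
  ring

end Aux

theorem stmt_4 : ∀ n : ℕ, g (4 * n + 3) = g (2 * n + 1) + 2 * g n := by
  intro n
  rw [Aux.g_eq, Aux.g_eq, Aux.g_eq]
  set P : Aux.F[X] := 1 + X + X ^ 2 with hP
  have hexp2 : expand Aux.F 2 (P ^ n) = P ^ (2 * n) := by
    rw [Aux.expand_two, ← pow_mul, mul_comm]
  have hexp4 : expand Aux.F 4 (P ^ n) = P ^ (4 * n) := by
    have : (4 : ℕ) = 2 * 2 := rfl
    rw [this, ← Polynomial.expand_expand, Aux.expand_two, Aux.expand_two,
      ← pow_mul, ← pow_mul]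
    ring_nf
  have h43 : P ^ (4 * n + 3) = P ^ 3 * expand Aux.F 4 (P ^ n) := by
    rw [hexp4, ← pow_add]; ring_nf
  have h21 : P ^ (2 * n + 1) = P * expand Aux.F 2 (P ^ n) := by
    rw [hexp2, ← pow_succ']
  rw [h43, h21, Aux.count4, Aux.count2]
  ring
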